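/- Let H be a class of real-valued functions on a set Z, let Φ: ℝ → ℝ be L-Lipschitz, and let S = {z_1,...,z_N} ⊆ Z. Then the empirical Rademacher complexity satisfies R̂_S(Φ ∘ H) ≤ L · R̂_S(H), where R̂_S(G) = (1/N) E_σ [sup_{g ∈ G} ∑_{i=1}^N σ_i g(z_i)] and σ_i are i.i.d. uniform ±1 random variables. -/

import Mathlib

open BigOperators Finset

/-- Empirical Rademacher complexity of a class `G` of real-valued functions on a sample
`z : Fin N → Z`: `(1/N) E_σ [sup_{g ∈ G} ∑ i, σ i * g (z i)]`, where the expectation is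
the uniform average over the `2^N` sign vectors `σ ∈ {-1,1}^N`. -/
noncomputable def empRad {Z : Type*} (N : ℕ) (z : Fin N → Z) (G : Set (Z → ℝ)) : ℝ :=
  (1 / (N : ℝ)) *
    ((∑ σ : Fin N → Bool,
      sSup ((fun g => ∑ i, (if σ i then (1 : ℝ) else -1) * g (z i)) '' G)) / 2 ^ N)

/-- `sSup` commutes with multiplication by a nonnegative constant. -/
lemma sSup_range_mul_left {ι : Type*} [Nonempty ι] (L : ℝ) (hL : 0 ≤ L) (f : ι → ℝ)
    (hb : BddAbove (Set.range f)) :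
    sSup (Set.range fun i => L * f i) = L * sSup (Set.range f) := by
  rcases eq_or_lt_of_le hL with h0 | h0
  · simp [← h0]
  obtain ⟨C, hC⟩ := hb
  have hb' : BddAbove (Set.range fun i => L * f i) := by
    refine ⟨L * C, ?_⟩
    rintro x ⟨i, rfl⟩
    exact mul_le_mul_of_nonneg_left (hC ⟨i, rfl⟩) hL
  apply le_antisymm
  · apply csSup_le (Set.range_nonempty _)
    rintro x ⟨i, rfl⟩
    exact mul_le_mul_of_nonneg_left (le_csSup ⟨C, hC⟩ ⟨i, rfl⟩) hL
  · rw [mul_comm, ← le_div_iff₀ h0]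
    apply csSup_le (Set.range_nonempty _)
    rintro x ⟨i, rfl⟩
    rw [le_div_iff₀ h0, mul_comm]
    exact le_csSup hb' ⟨i, rfl⟩

/-- The core analytic step of the contraction lemma. -/
lemma talagrand_core {ι : Type*} [Nonempty ι] (Φ : ℝ → ℝ) (L : ℝ)
    (hΦ : ∀ a b : ℝ, |Φ a - Φ b| ≤ L * |a - b|) (u a : ι → ℝ)
    (b1 : BddAbove (Set.range fun i => Φ (u i) + a i))
    (b2 : BddAbove (Set.range fun i => -Φ (u i) + a i))
    (b3 : BddAbove (Set.range fun i => L * u i + a i))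
    (b4 : BddAbove (Set.range fun i => -(L * u i) + a i)) :
    sSup (Set.range fun i => Φ (u i) + a i) + sSup (Set.range fun i => -Φ (u i) + a i) ≤
      sSup (Set.range fun i => L * u i + a i) +
        sSup (Set.range fun i => -(L * u i) + a i) := by
  set R := sSup (Set.range fun i => L * u i + a i) +
      sSup (Set.range fun i => -(L * u i) + a i) with hR
  have key : ∀ i j, (Φ (u i) + a i) + (-Φ (u j) + a j) ≤ R := by
    intro i j
    have h := hΦ (u i) (u j)
    have habs : Φ (u i) - Φ (u j) ≤ L * |u i - u j| := (le_abs_self _).trans h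
    rcases le_total (u j) (u i) with hij | hij
    · have hd : Φ (u i) - Φ (u j) ≤ L * u i - L * u j := by
        rw [abs_of_nonneg (by linarith)] at habs
        calc Φ (u i) - Φ (u j) ≤ L * (u i - u j) := habs
          _ = L * u i - L * u j := by ring
      have t1 : L * u i + a i ≤ sSup (Set.range fun i => L * u i + a i) :=
        le_csSup b3 ⟨i, rfl⟩
      have t2 : -(L * u j) + a j ≤ sSup (Set.range fun i => -(L * u i) + a i) :=
        le_csSup b4 ⟨j, rfl⟩
      rw [hR]; linarith
    · have hd : Φ (u i) - Φ (u j) ≤ L * u j - L * u i := by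
        rw [abs_of_nonpos (by linarith)] at habs
        calc Φ (u i) - Φ (u j) ≤ L * -(u i - u j) := habs
          _ = L * u j - L * u i := by ring
      have t1 : L * u j + a j ≤ sSup (Set.range fun i => L * u i + a i) :=
        le_csSup b3 ⟨j, rfl⟩
      have t2 : -(L * u i) + a i ≤ sSup (Set.range fun i => -(L * u i) + a i) :=
        le_csSup b4 ⟨i, rfl⟩
      rw [hR]; linarith
  have h2 : ∀ i, Φ (u i) + a i ≤ R - sSup (Set.range fun j => -Φ (u j) + a j) := by
    intro i
    rw [le_sub_iff_add_le, add_comm, ← le_sub_iff_add_le]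
    apply csSup_le (Set.range_nonempty _)
    rintro x ⟨j, rfl⟩
    have := key i j
    dsimp only
    linarith
  have h3 : sSup (Set.range fun i => Φ (u i) + a i) ≤
      R - sSup (Set.range fun j => -Φ (u j) + a j) := by
    apply csSup_le (Set.range_nonempty _)
    rintro x ⟨i, rfl⟩
    exact h2 i
  linarith

/-- Talagrand's contraction lemma: for an `L`-Lipschitz `Φ : ℝ → ℝ` and a class `H`
of real-valued functions (with well-defined, finite suprema),
`R̂_S(Φ ∘ H) ≤ L * R̂_S(H)`. -/
theorem talagrand_contraction {Z : Type*} (N : ℕ) (z : Fin N → Z)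
    (H : Set (Z → ℝ)) (hne : H.Nonempty)
    (Φ : ℝ → ℝ) (L : ℝ) (hL : 0 ≤ L)
    (hΦ : ∀ a b : ℝ, |Φ a - Φ b| ≤ L * |a - b|)
    (hbddH : ∀ σ : Fin N → Bool,
      BddAbove ((fun g => ∑ i, (if σ i then (1 : ℝ) else -1) * g (z i)) '' H))
    (hbddΦH : ∀ σ : Fin N → Bool,
      BddAbove ((fun g => ∑ i, (if σ i then (1 : ℝ) else -1) * g (z i)) ''
        ((fun h => Φ ∘ h) '' H))) :
    empRad N z ((fun h => Φ ∘ h) '' H) ≤ L * empRad N z H := by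
  haveI : Nonempty H := hne.to_subtype
  -- sign of a boolean
  set e : Bool → ℝ := fun b => if b then (1 : ℝ) else -1 with he
  -- the generalized functional
  set F : (Fin N → ℝ → ℝ) → (Fin N → Bool) → (Z → ℝ) → ℝ :=
    fun ψ σ h => ∑ i, e (σ i) * ψ i (h (z i)) with hF
  set Tot : (Fin N → ℝ → ℝ) → ℝ :=
    fun ψ => ∑ σ : Fin N → Bool, sSup (Set.range fun h : H => F ψ σ h) with hTot
  -- per-coordinate families
  set ψT : Finset (Fin N) → Fin N → ℝ → ℝ :=
    fun T i => if i ∈ T then (fun x => L * x) else Φ with hψT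
  -- bounds from hypotheses in pointwise form
  have hbH : ∀ σ : Fin N → Bool, ∃ C : ℝ, ∀ h ∈ H, ∑ i, e (σ i) * h (z i) ≤ C := by
    intro σ
    obtain ⟨C, hC⟩ := hbddH σ
    exact ⟨C, fun h hh => hC ⟨h, hh, rfl⟩⟩
  have hbΦ : ∀ σ : Fin N → Bool, ∃ C : ℝ, ∀ h ∈ H, ∑ i, e (σ i) * Φ (h (z i)) ≤ C := by
    intro σ
    obtain ⟨C, hC⟩ := hbddΦH σ
    refine ⟨C, fun h hh => hC ⟨Φ ∘ h, ⟨h, hh, rfl⟩, rfl⟩⟩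
  choose Cid hCid using hbH
  choose CΦ hCΦ using hbΦ
  -- boundedness for all the mixed families
  have bmix : ∀ (T : Finset (Fin N)) (σ : Fin N → Bool),
      BddAbove (Set.range fun h : H => F (ψT T) σ h) := by
    intro T σ
    set σ1 : Fin N → Bool := fun i => if i ∈ T then σ i else !(σ i) with hσ1
    set σ2 : Fin N → Bool := fun i => if i ∈ T then !(σ i) else σ i with hσ2
    refine ⟨(L * Cid σ + L * Cid σ1 + (CΦ σ + CΦ σ2)) / 2, ?_⟩
    rintro x ⟨⟨h, hh⟩, rfl⟩
    have esum : 2 * F (ψT T) σ h =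
        L * (∑ i, e (σ i) * h (z i)) + L * (∑ i, e (σ1 i) * h (z i)) +
          ((∑ i, e (σ i) * Φ (h (z i))) + ∑ i, e (σ2 i) * Φ (h (z i))) := by
      rw [hF]
      simp only [Finset.mul_sum, ← Finset.sum_add_distrib]
      apply Finset.sum_congr rfl
      intro i _
      by_cases hi : i ∈ T <;>
        simp only [hψT, hσ1, hσ2, hi, if_true, if_false, he] <;>
        cases σ i <;> simp <;> ring
    have e1 := mul_le_mul_of_nonneg_left (hCid σ h hh) hL
    have e2 := mul_le_mul_of_nonneg_left (hCid σ1 h hh) hL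
    have e3 := hCΦ σ h hh
    have e4 := hCΦ σ2 h hh
    simp only [Set.mem_setOf_eq]
    linarith
  -- the single-coordinate swap step
  have swap : ∀ (T : Finset (Fin N)) (j : Fin N), j ∉ T →
      Tot (ψT T) ≤ Tot (ψT (insert j T)) := by
    intro T j hj
    -- flip involution at coordinate j
    set fl : (Fin N → Bool) → (Fin N → Bool) :=
      fun σ => Function.update σ j (!(σ j)) with hfl
    have flinv : Function.Involutive fl := by
      intro σ
      funext i
      by_cases hi : i = j
      · subst hi; simp [hfl]
      · simp [hfl, Function.update_of_ne hi]
    -- pairing identity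
    have pair : ∀ ψ : Fin N → ℝ → ℝ,
        2 * Tot ψ = ∑ σ : Fin N → Bool,
          (sSup (Set.range fun h : H => F ψ σ h) +
            sSup (Set.range fun h : H => F ψ (fl σ) h)) := by
      intro ψ
      rw [Finset.sum_add_distrib, hTot, two_mul]
      congr 1
      exact (Fintype.sum_equiv flinv.toPerm _ _ (fun σ => rfl)).symm
    -- key pointwise inequality
    have pointwise : ∀ σ : Fin N → Bool,
        sSup (Set.range fun h : H => F (ψT T) σ h) +
          sSup (Set.range fun h : H => F (ψT T) (fl σ) h) ≤
        sSup (Set.range fun h : H => F (ψT (insert j T)) σ h) +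
          sSup (Set.range fun h : H => F (ψT (insert j T)) (fl σ) h) := by
      intro σ
      set u : H → ℝ := fun h => (h : Z → ℝ) (z j) with hu
      set a : H → ℝ := fun h => ∑ i ∈ Finset.univ.erase j, e (σ i) * ψT T i ((h : Z → ℝ) (z i))
        with ha
      -- decompositions
      have dec : ∀ (ψ : Fin N → ℝ → ℝ) (τ : Fin N → Bool) (h : H),
          F ψ τ h = e (τ j) * ψ j (u h) + ∑ i ∈ Finset.univ.erase j,
            e (τ i) * ψ i ((h : Z → ℝ) (z i)) := by
        intro ψ τ h
        rw [hF]
        exact (Finset.add_sum_erase _ _ (Finset.mem_univ j)).symm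
      have offeq : ∀ (τ : Fin N → Bool) (h : H),
          (∑ i ∈ Finset.univ.erase j, e (τ i) * ψT (insert j T) i ((h : Z → ℝ) (z i))) =
            ∑ i ∈ Finset.univ.erase j, e (τ i) * ψT T i ((h : Z → ℝ) (z i)) := by
        intro τ h
        apply Finset.sum_congr rfl
        intro i hi
        have hij : i ≠ j := (Finset.mem_erase.mp hi).1
        simp [hψT, Finset.mem_insert, hij]
      have offfl : ∀ (h : H),
          (∑ i ∈ Finset.univ.erase j, e (fl σ i) * ψT T i ((h : Z → ℝ) (z i))) = a h := by
        intro h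
        apply Finset.sum_congr rfl
        intro i hi
        have hij : i ≠ j := (Finset.mem_erase.mp hi).1
        rw [hfl]; simp [Function.update_of_ne hij]
      have flj : fl σ j = !(σ j) := by simp [hfl]
      have hψTj : ψT T j = Φ := by simp [hψT, hj]
      have hψT'j : ψT (insert j T) j = fun x => L * x := by simp [hψT]
      -- rewrite each sSup
      have d1 : ∀ h : H, F (ψT T) σ h = e (σ j) * Φ (u h) + a h := by
        intro h; rw [dec, hψTj, ha]
      have hneg : e (!(σ j)) = -(e (σ j)) := by rw [he]; cases σ j <;> simp
      have d2 : ∀ h : H, F (ψT T) (fl σ) h = -(e (σ j)) * Φ (u h) + a h := by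
        intro h
        rw [dec, offfl, flj, hψTj, hneg]
      have d3 : ∀ h : H, F (ψT (insert j T)) σ h = e (σ j) * (L * u h) + a h := by
        intro h; rw [dec, offeq, hψT'j, ha]
      have d4 : ∀ h : H, F (ψT (insert j T)) (fl σ) h = -(e (σ j)) * (L * u h) + a h := by
        intro h
        rw [dec, offeq, offfl, flj, hψT'j, hneg]
      have b1 := bmix T σ
      have b2 := bmix T (fl σ)
      have b3 := bmix (insert j T) σ
      have b4 := bmix (insert j T) (fl σ)
      simp only [funext d1, funext d2, funext d3, funext d4] at b1 b2 b3 b4 ⊢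
      rcases Bool.dichotomy (σ j) with hb | hb
      · -- σ j = false, e (σ j) = -1
        have hej : e (σ j) = -1 := by rw [hb, he]; simp
        simp only [hej, neg_neg, neg_one_mul, one_mul] at b1 b2 b3 b4 ⊢
        rw [add_comm (sSup (Set.range fun h : H => -Φ (u h) + a h)),
          add_comm (sSup (Set.range fun h : H => -(L * u h) + a h))]
        exact talagrand_core Φ L hΦ u a b2 b1 b4 b3
      · have hej : e (σ j) = 1 := by rw [hb, he]; simp
        simp only [hej, neg_one_mul, one_mul] at b1 b2 b3 b4 ⊢
        exact talagrand_core Φ L hΦ u a b1 b2 b3 b4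
    have two_ineq : 2 * Tot (ψT T) ≤ 2 * Tot (ψT (insert j T)) := by
      rw [pair, pair]
      exact Finset.sum_le_sum fun σ _ => pointwise σ
    linarith
  -- induction over the finset of converted coordinates
  have main : ∀ T : Finset (Fin N), Tot (ψT ∅) ≤ Tot (ψT T) := by
    intro T
    induction T using Finset.induction_on with
    | empty => exact le_refl _
    | insert _ _ hj ih => exact ih.trans (swap _ _ hj)
  have key := main Finset.univ
  -- identify the two ends
  have lhs_eq : (∑ σ : Fin N → Bool,
      sSup ((fun g => ∑ i, (if σ i then (1 : ℝ) else -1) * g (z i)) ''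
        ((fun h => Φ ∘ h) '' H))) = Tot (ψT ∅) := by
    apply Finset.sum_congr rfl
    intro σ _
    congr 1
    rw [Set.image_image, Set.image_eq_range]
    congr 1
  have rhs_eq : Tot (ψT Finset.univ) = L * ∑ σ : Fin N → Bool,
      sSup ((fun g => ∑ i, (if σ i then (1 : ℝ) else -1) * g (z i)) '' H) := by
    rw [Finset.mul_sum, hTot]
    apply Finset.sum_congr rfl
    intro σ _
    have hfe : (fun h : H => F (ψT Finset.univ) σ h) =
        fun h : H => L * ∑ i, e (σ i) * (h : Z → ℝ) (z i) := by
      funext h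
      rw [hF, Finset.mul_sum]
      apply Finset.sum_congr rfl
      intro i _
      simp [hψT]
      ring
    have hbr : BddAbove (Set.range fun h : H => ∑ i, e (σ i) * (h : Z → ℝ) (z i)) := by
      have := hbddH σ
      rwa [Set.image_eq_range] at this
    have himg : (Set.range fun h : H => ∑ i, e (σ i) * (h : Z → ℝ) (z i)) =
        (fun g => ∑ i, (if σ i then (1 : ℝ) else -1) * g (z i)) '' H :=
      (Set.image_eq_range (fun g : Z → ℝ => ∑ i, e (σ i) * g (z i)) H).symm
    rw [hfe, sSup_range_mul_left L hL _ hbr, himg]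
  rw [rhs_eq] at key
  rw [empRad, empRad, lhs_eq]
  set S := ∑ σ : Fin N → Bool,
      sSup ((fun g => ∑ i, (if σ i then (1 : ℝ) else -1) * g (z i)) '' H)
  calc (1 / (N : ℝ)) * (Tot (ψT ∅) / 2 ^ N)
      ≤ (1 / (N : ℝ)) * ((L * S) / 2 ^ N) := by gcongr
    _ = L * ((1 / (N : ℝ)) * (S / 2 ^ N)) := by ring
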